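/- Under the congruence generated by the n-Catalan equations, any two terms t₁, t₂ over one n-ary symbol ⊗ with the same underlying variable list satisfy t₁ =_{C_n} t₂. -/

import Mathlib

/-- Terms of the free algebra over variable set `V` with one n-ary operation ⊗. -/
inductive CTerm (n : ℕ) (V : Type*) : Type _
  | var (v : V) : CTerm n V
  | op (f : Fin n → CTerm n V) : CTerm n V

/-- `brk i x` is the term ⊗(x₀,…,x_{i-1}, ⊗(x_i,…,x_{i+n-1}), x_{i+n},…,x_{2n-2}):
the n-ary tensor of the entries of `x` with one inner ⊗ placed at (0-based) position
`i`.  The Catalan rule α_i rewrites `brk i x` to `brk (i-1) x` for `0 < i < n`. -/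
def brk {n : ℕ} {V : Type*} (i : ℕ) (x : ℕ → CTerm n V) : CTerm n V :=
  .op fun j => if (j : ℕ) < i then x (j : ℕ)
    else if (j : ℕ) = i then .op (fun k : Fin n => x (i + (k : ℕ)))
    else x ((j : ℕ) + n - 1)

/-- One rewrite step of the Catalan rewriting system: a rule
α_i : ⊗(x₁,…,x_i, ⊗(x_{i+1},…,x_{i+n}), x_{i+n+1},…,x_{2n-1}) →
⊗(x₁,…,x_{i-1}, ⊗(x_i,…,x_{i+n-1}), x_{i+n},…,x_{2n-1}) (for 0 < i < n) applied at
some subterm position, with arbitrary terms substituted for the variables. -/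
inductive CStep {n : ℕ} {V : Type*} : CTerm n V → CTerm n V → Prop
  | rule (i : ℕ) (h1 : 0 < i) (h2 : i < n) (x : ℕ → CTerm n V) :
      CStep (brk i x) (brk (i - 1) x)
  | congr {f g : Fin n → CTerm n V} (i : Fin n) :
      CStep (f i) (g i) → (∀ j, j ≠ i → f j = g j) → CStep (.op f) (.op g)

/-- The underlying list of a term: its left-to-right sequence of variables. -/
def uList {n : ℕ} {V : Type*} : CTerm n V → List V
  | .var v => [v]
  | .op f => (List.ofFn fun i : Fin n => uList (f i)).flatten

/-- The smallest congruence on the free term algebra generated by all substitution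
instances of the n-Catalan equations applied at arbitrary subterm positions. -/
inductive CnEq {n : ℕ} {V : Type*} : CTerm n V → CTerm n V → Prop
  | base (i : ℕ) (h1 : 0 < i) (h2 : i < n) (x : ℕ → CTerm n V) :
      CnEq (brk i x) (brk (i - 1) x)
  | refl (t : CTerm n V) : CnEq t t
  | symm {s t : CTerm n V} : CnEq s t → CnEq t s
  | trans {s t u : CTerm n V} : CnEq s t → CnEq t u → CnEq s u
  | congr {f g : Fin n → CTerm n V} : (∀ i, CnEq (f i) (g i)) → CnEq (.op f) (.op g)

lemma ofFn_eq_map_range {α : Type*} {m : ℕ} (g : Fin m → α) (G : ℕ → α)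
    (h : ∀ j : Fin m, G (j : ℕ) = g j) : List.ofFn g = (List.range m).map G := by
  apply List.ext_getElem
  · simp
  · intro i h1 h2
    simp only [List.getElem_ofFn, List.getElem_map, List.getElem_range]
    exact (h ⟨i, by simpa using h1⟩).symm

lemma uList_brk {n : ℕ} {V : Type*} (hn : 1 ≤ n) {i : ℕ} (hi : i < n) (x : ℕ → CTerm n V) :
    uList (brk i x) = ((List.range (2*n-1)).map fun j => uList (x j)).flatten := by
  set F : ℕ → List V := fun j => uList (x j) with hF
  set G : ℕ → List V := fun j =>
    if j < i then F j else if j = i then ((List.range' i n).map F).flatten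
    else F (j + n - 1) with hG
  have key : uList (brk i x) = ((List.range n).map G).flatten := by
    rw [brk]
    show (List.ofFn fun j : Fin n => uList _).flatten = _
    congr 1
    apply ofFn_eq_map_range
    intro j
    by_cases h1 : (j : ℕ) < i
    · simp only [hG, hF, if_pos h1]
    · by_cases h2 : (j : ℕ) = i
      · simp only [hG, if_neg h1, if_pos h2]
        show _ = (List.ofFn fun k : Fin n => uList (x (i + (k:ℕ)))).flatten
        congr 1
        rw [ofFn_eq_map_range (fun k : Fin n => uList (x (i+(k:ℕ)))) (fun t => F (i+t)) (fun k => rfl)]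
        have hr : List.range' i n = List.map (fun t => i + t) (List.range' 0 n) := by
          rw [List.map_add_range']
          norm_num
        rw [hr, List.map_map, List.range_eq_range']
        rfl
      · simp only [hG, hF, if_neg h1, if_neg h2]
  rw [key]
  have hsplit : List.range n = List.range' 0 i ++ (i :: List.range' (i+1) (n - i - 1)) := by
    have e2 : List.range' i (n - i) = i :: List.range' (i+1) (n - i - 1) := by
      obtain ⟨m, hm⟩ : ∃ m, n - i = m + 1 := ⟨n-i-1, by omega⟩
      rw [hm, List.range'_succ]
      norm_num
    have e1 := @List.range'_append_1 0 i (n-i)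
    rw [Nat.zero_add] at e1
    have e1' : List.range' 0 i ++ List.range' i (n-i) = List.range' 0 n := by
      rw [e1]; congr 1; omega
    rw [List.range_eq_range', ← e1', e2]
  have hfin : List.range (2*n-1) = (List.range' 0 i ++ List.range' i n) ++ List.range' (i+n) (n-i-1) := by
    rw [List.range_eq_range']
    have e1 := @List.range'_append_1 0 i n
    have e2 := @List.range'_append_1 0 (i+n) (n-i-1)
    simp only [Nat.zero_add] at e1 e2
    rw [show 2*n-1 = (i+n)+(n-i-1) from by omega, ← e2, ← e1]
  have p1 : (List.range' 0 i).map G = (List.range' 0 i).map F := by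
    apply List.map_congr_left
    intro a ha
    have : a < i := by
      have := List.mem_range'_1.mp ha; omega
    simp [hG, this]
  have p2 : G i = ((List.range' i n).map F).flatten := by
    simp [hG]
  have p3 : (List.range' (i+1) (n-i-1)).map G = (List.range' (i+n) (n-i-1)).map F := by
    have step1 : (List.range' (i+1) (n-i-1)).map G = (List.range' (i+1) (n-i-1)).map (fun j => F (j + (n-1))) := by
      apply List.map_congr_left
      intro a ha
      have ha' := List.mem_range'_1.mp ha
      have h1 : ¬ (a < i) := by omega
      have h2 : ¬ (a = i) := by omega
      simp only [hG, h1, h2, if_false]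
      congr 1
      omega
    rw [step1]
    have step2 : (List.range' (i+1) (n-i-1)).map (fun j => F (j + (n-1))) =
        ((List.range' (i+1) (n-i-1)).map (fun j => (n-1) + j)).map F := by
      rw [List.map_map]; apply List.map_congr_left; intro a _; simp [Nat.add_comm]
    rw [step2, List.map_add_range']
    congr 2
    omega
  rw [hsplit, hfin]
  simp only [List.map_append, List.flatten_append, List.map_cons, List.flatten_cons, p1, p2, p3,
    List.append_assoc]

lemma uList_cnEq {n : ℕ} {V : Type*} (hn : 1 ≤ n) {s t : CTerm n V} (h : CnEq s t) :
    uList s = uList t := by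
  induction h with
  | base i h1 h2 x => rw [uList_brk hn h2 x, uList_brk hn (by omega : i - 1 < n) x]
  | refl t => rfl
  | symm _ ih => exact ih.symm
  | trans _ _ ih1 ih2 => exact ih1.trans ih2
  | congr _ ih =>
    show (List.ofFn _).flatten = (List.ofFn _).flatten
    congr 1
    exact congrArg List.ofFn (funext ih)

/-- number of nodes of a term -/
def csize {n : ℕ} {V : Type*} : CTerm n V → ℕ
  | .var _ => 1
  | .op f => 1 + (List.ofFn fun i : Fin n => csize (f i)).sum

lemma csize_op {n : ℕ} {V : Type*} (f : Fin n → CTerm n V) :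
    csize (CTerm.op f) = 1 + ∑ i : Fin n, csize (f i) := by
  rw [csize, Fin.sum_ofFn]

lemma length_uList_op {n : ℕ} {V : Type*} (f : Fin n → CTerm n V) :
    (uList (CTerm.op f)).length = ∑ i : Fin n, (uList (f i)).length := by
  show ((List.ofFn fun i : Fin n => uList (f i)).flatten).length = _
  rw [List.length_flatten, List.map_ofFn, Fin.sum_ofFn]
  rfl

lemma csize_uList {n : ℕ} {V : Type*} (hn : 1 ≤ n) (t : CTerm n V) :
    (n-1) * csize t + 1 = n * (uList t).length := by
  induction t with
  | var v =>
    show (n-1) * 1 + 1 = n * 1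
    omega
  | op f ih =>
    rw [csize_op, length_uList_op, Finset.mul_sum]
    have : ∀ i : Fin n, n * (uList (f i)).length = (n-1) * csize (f i) + 1 :=
      fun i => (ih i).symm
    rw [Finset.sum_congr rfl (fun i _ => this i), Finset.sum_add_distrib,
      Finset.sum_const, Finset.card_univ, Fintype.card_fin, ← Finset.mul_sum]
    obtain ⟨m, rfl⟩ : ∃ m, n = m + 1 := ⟨n - 1, by omega⟩
    simp only [Nat.add_sub_cancel]
    ring

lemma csize_eq_of_uList {n : ℕ} {V : Type*} (hn : 2 ≤ n) {s t : CTerm n V}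
    (h : uList s = uList t) : csize s = csize t := by
  have h1 := csize_uList (by omega : 1 ≤ n) s
  have h2 := csize_uList (by omega : 1 ≤ n) t
  rw [h, ← h2] at h1
  have hp : 0 < n - 1 := by omega
  exact Nat.eq_of_mul_eq_mul_left hp (by omega)

lemma one_le_length_uList {n : ℕ} {V : Type*} (hn : 1 ≤ n) (t : CTerm n V) :
    1 ≤ (uList t).length := by
  have h := csize_uList hn t
  by_contra hc
  have : (uList t).length = 0 := by omega
  rw [this] at h
  omega

lemma n_le_length_uList_op {n : ℕ} {V : Type*} (hn : 1 ≤ n) (f : Fin n → CTerm n V) :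
    n ≤ (uList (CTerm.op f)).length := by
  rw [length_uList_op]
  calc n = ∑ _i : Fin n, 1 := by simp
  _ ≤ _ := Finset.sum_le_sum (fun i _ => one_le_length_uList hn (f i))

lemma one_le_csize {n : ℕ} {V : Type*} (t : CTerm n V) : 1 ≤ csize t := by
  cases t with
  | var v => exact le_refl 1
  | op f => rw [csize_op]; omega

/-- left combs: every argument except possibly the first is a variable -/
inductive IsComb {n : ℕ} {V : Type*} : CTerm n V → Prop
  | var (v : V) : IsComb (.var v)
  | op (f : Fin n → CTerm n V) (h0 : ∀ j : Fin n, (j : ℕ) = 0 → IsComb (f j))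
      (hr : ∀ i : Fin n, (i : ℕ) ≠ 0 → ∃ v, f i = .var v) : IsComb (.op f)

lemma flatten_ofFn_singleton {α : Type*} {m : ℕ} (w : Fin m → α) :
    (List.ofFn fun i => [w i]).flatten = List.ofFn w := by
  induction m with
  | zero => simp
  | succ m ih =>
    rw [List.ofFn_succ (f := fun i => [w i]), List.flatten_cons, List.ofFn_succ (f := w), ih]
    rfl

lemma uList_op_comb {m : ℕ} {V : Type*} (f : Fin (m+1) → CTerm (m+1) V) (w : Fin m → V)
    (hw : ∀ i : Fin m, f i.succ = CTerm.var (w i)) :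
    uList (CTerm.op f) = uList (f 0) ++ List.ofFn w := by
  show (List.ofFn fun i => uList (f i)).flatten = _
  rw [List.ofFn_succ, List.flatten_cons]
  congr 1
  have he : (fun i : Fin m => uList (f i.succ)) = fun i => [w i] :=
    funext fun i => by rw [hw i]; rfl
  rw [he, flatten_ofFn_singleton]

lemma comb_unique {n : ℕ} {V : Type*} (hn : 2 ≤ n) {s : CTerm n V} (hs : IsComb s) :
    ∀ t : CTerm n V, IsComb t → uList s = uList t → s = t := by
  induction hs with
  | var v =>
    intro t ht h
    cases ht with
    | var w =>
      have : v = w := by simpa [uList] using h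
      rw [this]
    | op g hg0 hgr =>
      exfalso
      have h2 := n_le_length_uList_op (by omega : 1 ≤ n) g
      rw [← h] at h2
      simp [uList] at h2
      omega
  | op f h0 hr ih =>
    intro t ht h
    cases ht with
    | var w =>
      exfalso
      have h2 := n_le_length_uList_op (by omega : 1 ≤ n) f
      rw [h] at h2
      simp [uList] at h2
      omega
    | op g hg0 hgr =>
      obtain ⟨m, rfl⟩ : ∃ m, n = m + 1 := ⟨n-1, by omega⟩
      have hf' : ∀ i : Fin m, ∃ v, f i.succ = CTerm.var v := fun i => hr i.succ (by simp)
      have hg' : ∀ i : Fin m, ∃ v, g i.succ = CTerm.var v := fun i => hgr i.succ (by simp)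
      choose vf hvf using hf'
      choose vg hvg using hg'
      rw [uList_op_comb f vf hvf, uList_op_comb g vg hvg] at h
      have hlen : (List.ofFn vf).length = (List.ofFn vg).length := by simp
      obtain ⟨h1, h2⟩ := List.append_inj' h hlen
      have e0 : f 0 = g 0 := ih 0 rfl (g 0) (hg0 0 rfl) h1
      have ev : vf = vg := List.ofFn_injective h2
      congr 1
      funext i
      induction i using Fin.cases with
      | zero => exact e0
      | succ j => rw [hvf j, hvg j, ev]


lemma mergeB {n : ℕ} {V : Type*} (hn : 2 ≤ n) (N : ℕ)
    (IH : ∀ s : CTerm n V, csize s ≤ N → ∃ e, IsComb e ∧ CnEq s e) :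
    ∀ (k : ℕ) (c : Fin n → CTerm n V), csize (.op c) ≤ N + 1 →
      (∀ i, IsComb (c i)) → (∀ j : Fin n, k < (j : ℕ) → ∃ v, c j = .var v) →
      ∃ e, IsComb e ∧ CnEq (.op c) e := by
  intro k
  induction k with
  | zero =>
    intro c hsz hc hv
    exact ⟨.op c, IsComb.op c (fun j _ => hc j) (fun i hi => hv i (by omega)), .refl _⟩
  | succ k ihk =>
    intro c hsz hc hv
    by_cases hkn : k + 1 < n
    case neg =>
      exact ihk c hsz hc (fun j hj => absurd j.isLt (by omega))
    case pos =>
    obtain ⟨m, rfl⟩ : ∃ m, n = m + 1 := ⟨n - 1, by omega⟩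
    have hkm : k < m + 1 := by omega
    have hmm : m < m + 1 := by omega
    set K : Fin (m+1) := ⟨k+1, hkn⟩ with hK
    cases hck : c K with
    | var w =>
      apply ihk c hsz hc
      intro j hj
      by_cases hj2 : (j : ℕ) = k + 1
      · exact ⟨w, by rwa [show j = K from Fin.ext hj2]⟩
      · exact hv j (by omega)
    | op d =>
      have hcK := hc K
      rw [hck] at hcK
      cases hcK with
      | op _ hd0 hdr =>
      obtain ⟨w₁, hw1⟩ : ∃ v, d ⟨m, hmm⟩ = CTerm.var v :=
        hdr ⟨m, hmm⟩ (show m ≠ 0 by omega)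
      set x : ℕ → CTerm (m+1) V := fun j =>
        if h : j ≤ k then c ⟨j, by omega⟩
        else if h2 : j ≤ k + (m+1) then d ⟨j - (k+1), by omega⟩
        else if h3 : j + 1 - (m+1) < m+1 then c ⟨j + 1 - (m+1), h3⟩ else c K with hx
      set E : CTerm (m+1) V :=
        CTerm.op (Fin.cases (c ⟨k, hkm⟩) (fun i : Fin m => d i.castSucc)) with hE
      set F : Fin (m+1) → CTerm (m+1) V := fun j =>
        if (j:ℕ) < k then c j else if (j:ℕ) = k then E
        else if (j:ℕ) = k+1 then CTerm.var w₁ else c j with hF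
      have eq1 : CTerm.op c = brk (k+1) x := by
        rw [brk]
        congr 1
        funext j
        rcases lt_trichotomy ((j:ℕ)) (k+1) with h | h | h
        · rw [if_pos h]
          have hjk : (j:ℕ) ≤ k := by omega
          simp only [hx]
          rw [dif_pos hjk]
        · rw [if_neg (by omega), if_pos h]
          have hjK : j = K := Fin.ext (show (j:ℕ) = k+1 from h)
          rw [hjK, hck]
          congr 1
          funext t
          have h1 : ¬ (k+1+(t:ℕ) ≤ k) := by omega
          have h2 : k+1+(t:ℕ) ≤ k + (m+1) := by omega
          simp only [hx]
          rw [dif_neg h1, dif_pos h2]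
          exact congrArg d (Fin.ext (show (t:ℕ) = k+1+(t:ℕ) - (k+1) by omega))
        · rw [if_neg (by omega), if_neg (by omega)]
          have h1 : ¬ ((j:ℕ) + (m+1) - 1 ≤ k) := by omega
          have h2 : ¬ ((j:ℕ) + (m+1) - 1 ≤ k + (m+1)) := by omega
          have h3 : ((j:ℕ) + (m+1) - 1) + 1 - (m+1) < m+1 := by omega
          simp only [hx]
          rw [dif_neg h1, dif_neg h2, dif_pos h3]
          exact congrArg c (Fin.ext (show (j:ℕ) = (j:ℕ) + (m+1) - 1 + 1 - (m+1) by omega))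
      have eq2 : brk k x = CTerm.op F := by
        rw [brk]
        congr 1
        funext j
        rcases lt_trichotomy ((j:ℕ)) k with h | h | h
        · rw [if_pos h]
          simp only [hF]
          rw [if_pos h]
          have hjk : (j:ℕ) ≤ k := by omega
          simp only [hx]
          rw [dif_pos hjk]
        · rw [if_neg (by omega), if_pos h]
          simp only [hF]
          rw [if_neg (by omega), if_pos h]
          simp only [hE]
          congr 1
          funext t
          induction t using Fin.cases with
          | zero =>
            rw [Fin.cases_zero]
            have h1 : k + ((0 : Fin (m+1)):ℕ) ≤ k := by simp
            simp only [hx]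
            rw [dif_pos h1]
            exact congrArg c (Fin.ext (show k + ((0 : Fin (m+1)):ℕ) = k by simp))
          | succ i =>
            rw [Fin.cases_succ]
            have h1 : ¬ (k + ((i.succ : Fin (m+1)):ℕ) ≤ k) := by simp
            have h2 : k + ((i.succ : Fin (m+1)):ℕ) ≤ k + (m+1) := by
              simp only [Fin.val_succ]
              omega
            simp only [hx]
            rw [dif_neg h1, dif_pos h2]
            exact congrArg d (Fin.ext (show k + ((i.succ : Fin (m+1)):ℕ) - (k+1) = (i:ℕ) by
              simp only [Fin.val_succ]; omega))
        · rw [if_neg (by omega), if_neg (by omega)]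
          by_cases hj1 : (j:ℕ) = k+1
          · have h1 : ¬ ((j:ℕ) + (m+1) - 1 ≤ k) := by omega
            have h2 : (j:ℕ) + (m+1) - 1 ≤ k + (m+1) := by omega
            simp only [hx, hF]
            rw [dif_neg h1, dif_pos h2, if_neg (by omega), if_neg (by omega), if_pos hj1]
            rw [show (⟨(j:ℕ) + (m+1) - 1 - (k+1), by omega⟩ : Fin (m+1)) = ⟨m, hmm⟩ from
              Fin.ext (show (j:ℕ) + (m+1) - 1 - (k+1) = m by omega), hw1]
          · have h1 : ¬ ((j:ℕ) + (m+1) - 1 ≤ k) := by omega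
            have h2 : ¬ ((j:ℕ) + (m+1) - 1 ≤ k + (m+1)) := by omega
            have h3 : ((j:ℕ) + (m+1) - 1) + 1 - (m+1) < m+1 := by omega
            simp only [hx, hF]
            rw [dif_neg h1, dif_neg h2, dif_pos h3,
              if_neg (by omega), if_neg (by omega), if_neg (by omega)]
            exact congrArg c (Fin.ext (show (j:ℕ) + (m+1) - 1 + 1 - (m+1) = (j:ℕ) by omega))
      have step1 : CnEq (CTerm.op c) (CTerm.op F) := by
        have hb := CnEq.base (k+1) (by omega) hkn x
        rw [Nat.add_sub_cancel] at hb
        rw [eq2] at hb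
        rw [← eq1] at hb
        exact hb
      -- size bound for E
      have hszE : csize E ≤ N := by
        have hEsz : csize E = 1 + (csize (c ⟨k, hkm⟩) +
            ∑ i : Fin m, csize (d i.castSucc)) := by
          rw [hE, csize_op, Fin.sum_univ_succ]
          simp only [Fin.cases_zero, Fin.cases_succ]
        have hdsum : ∑ i : Fin m, csize (d i.castSucc) + csize (d (Fin.last m)) =
            ∑ t : Fin (m+1), csize (d t) :=
          (Fin.sum_univ_castSucc (f := fun t => csize (d t))).symm
        have hdlast : 1 ≤ csize (d (Fin.last m)) := one_le_csize _
        have hcKsz : csize (c K) = 1 + ∑ t : Fin (m+1), csize (d t) := by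
          rw [hck, csize_op]
        have hpair : csize (c ⟨k, hkm⟩) + csize (c K) ≤ ∑ i : Fin (m+1), csize (c i) := by
          have hne : (⟨k, hkm⟩ : Fin (m+1)) ≠ K := Fin.ne_of_val_ne (show k ≠ k+1 by omega)
          have hsub := Finset.sum_le_sum_of_subset
            (Finset.subset_univ ({⟨k, hkm⟩, K} : Finset (Fin (m+1))))
            (f := fun i => csize (c i))
          rwa [Finset.sum_pair hne] at hsub
        have hctot : csize (CTerm.op c) = 1 + ∑ i : Fin (m+1), csize (c i) := csize_op c
        omega
      obtain ⟨e', he', hEe⟩ := IH E hszE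
      set c'' : Fin (m+1) → CTerm (m+1) V := fun j =>
        if (j:ℕ) = k then e' else F j with hc2
      have step2 : CnEq (CTerm.op F) (CTerm.op c'') := by
        apply CnEq.congr
        intro j
        by_cases hj : (j:ℕ) = k
        · have hFj : F j = E := by
            simp only [hF]
            rw [if_neg (by omega), if_pos hj]
          have hcj : c'' j = e' := by
            simp only [hc2]
            rw [if_pos hj]
          rw [hFj, hcj]
          exact hEe
        · have : c'' j = F j := by
            simp only [hc2]
            rw [if_neg hj]
          rw [this]
          exact CnEq.refl _
      have chain : CnEq (CTerm.op c) (CTerm.op c'') := step1.trans step2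
      have hsz'' : csize (CTerm.op c'') ≤ N + 1 := by
        have := csize_eq_of_uList hn (uList_cnEq (by omega) chain)
        omega
      have hc'' : ∀ i, IsComb (c'' i) := by
        intro j
        simp only [hc2, hF]
        by_cases hj : (j:ℕ) = k
        · rw [if_pos hj]; exact he'
        · rw [if_neg hj]
          by_cases h1 : (j:ℕ) < k
          · rw [if_pos h1]; exact hc j
          · rw [if_neg h1, if_neg hj]
            by_cases h2 : (j:ℕ) = k+1
            · rw [if_pos h2]; exact IsComb.var w₁
            · rw [if_neg h2]; exact hc j
      have hv'' : ∀ j : Fin (m+1), k < (j:ℕ) → ∃ v, c'' j = CTerm.var v := by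
        intro j hj
        simp only [hc2, hF]
        rw [if_neg (by omega), if_neg (by omega), if_neg (by omega)]
        by_cases h2 : (j:ℕ) = k+1
        · rw [if_pos h2]; exact ⟨w₁, rfl⟩
        · rw [if_neg h2]; exact hv j (by omega)
      obtain ⟨e, he, hfin⟩ := ihk c'' hsz'' hc'' hv''
      exact ⟨e, he, chain.trans hfin⟩

lemma exists_comb {n : ℕ} {V : Type*} (hn : 2 ≤ n) :
    ∀ (N : ℕ) (t : CTerm n V), csize t ≤ N → ∃ e, IsComb e ∧ CnEq t e := by
  intro N
  induction N using Nat.strong_induction_on with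
  | _ N IHN =>
  intro t ht
  cases t with
  | var v => exact ⟨.var v, IsComb.var v, .refl _⟩
  | op f =>
    have hsum : ∀ i, csize (f i) ≤ ∑ j : Fin n, csize (f j) :=
      fun i => Finset.single_le_sum (f := fun j => csize (f j))
        (fun j _ => Nat.zero_le _) (Finset.mem_univ i)
    have hop : csize (CTerm.op f) = 1 + ∑ j : Fin n, csize (f j) := csize_op f
    have hN1 : 1 ≤ N := le_trans (one_le_csize _) ht
    have hlt : N - 1 < N := by omega
    have hfi : ∀ i, csize (f i) ≤ N - 1 := by
      intro i
      have := hsum i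
      omega
    choose e he hce using fun i => IHN (N-1) hlt (f i) (hfi i)
    have h1 : CnEq (CTerm.op f) (CTerm.op e) := CnEq.congr hce
    have hsz2 : csize (CTerm.op e) ≤ (N-1) + 1 := by
      have := csize_eq_of_uList hn (uList_cnEq (by omega) h1)
      omega
    obtain ⟨E, hE, h2⟩ := mergeB hn (N-1) (fun s hs => IHN (N-1) hlt s hs) (n-1) e hsz2
      (fun i => he i) (fun j hj => absurd j.isLt (by omega))
    exact ⟨E, hE, h1.trans h2⟩

/-- any two terms with the same underlying variable list are congruent
modulo the n-Catalan equations. -/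
theorem stmt_13 {n : ℕ} (hn : 2 ≤ n) {V : Type*} (t₁ t₂ : CTerm n V)
    (h : uList t₁ = uList t₂) : CnEq t₁ t₂ := by
  obtain ⟨c₁, hc1, he1⟩ := exists_comb hn (csize t₁) t₁ le_rfl
  obtain ⟨c₂, hc2, he2⟩ := exists_comb hn (csize t₂) t₂ le_rfl
  have hu : uList c₁ = uList c₂ := by
    rw [← uList_cnEq (by omega : 1 ≤ n) he1, ← uList_cnEq (by omega : 1 ≤ n) he2, h]
  have hcc := comb_unique hn hc1 c₂ hc2 hu
  exact he1.trans (hcc ▸ he2.symm)
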